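/- Let M be a finite monoid in DA, i.e., satisfying (xy)^ω x (xy)^ω = (xy)^ω for all x, y ∈ M, where ω is an exponent such that z^ω is idempotent for all z ∈ M. Let φ : A* → M be a monoid morphism from the free monoid over a finite alphabet A, and let x, y, z ∈ A* be words with φ(x) R-equivalent to φ(xy) and alph(z) ⊆ alph(y). Then φ(x) is R-equivalent to φ(xz). -/

import Mathlib

variable {M : Type*}

def rLe [Monoid M] (u v : M) : Prop := ∃ q, u = v * q
def rEq [Monoid M] (u v : M) : Prop := rLe u v ∧ rLe v u

section Aux

variable [Monoid M]

private lemma rEq_trans {u v w : M} (h1 : rEq u v) (h2 : rEq v w) : rEq u w := by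
  obtain ⟨⟨q1, hq1⟩, ⟨q2, hq2⟩⟩ := h1
  obtain ⟨⟨q3, hq3⟩, ⟨q4, hq4⟩⟩ := h2
  exact ⟨⟨q3 * q1, by rw [hq1, hq3, mul_assoc]⟩, ⟨q2 * q4, by rw [hq4, hq2, mul_assoc]⟩⟩

private lemma conjPow (a b : M) : ∀ n : ℕ, (a * b) ^ n * a = a * (b * a) ^ n := by
  intro n
  induction n with
  | zero => simp
  | succ k ih =>
      rw [pow_succ, pow_succ]
      rw [show (a * b) ^ k * (a * b) * a = (a * b) ^ k * a * (b * a) by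
        rw [mul_assoc, mul_assoc, mul_assoc]]
      rw [ih, mul_assoc]

private lemma absorbPow {s w : M} (h : s = s * w) : ∀ n : ℕ, s = s * w ^ n := by
  intro n
  induction n with
  | zero => simp
  | succ k ih => rw [pow_succ, ← mul_assoc, ← ih, ← h]

private lemma idemPowSucc {e : M} (he : e * e = e) : ∀ n : ℕ, e ^ (n + 1) = e := by
  intro n
  induction n with
  | zero => simp
  | succ k ih => rw [pow_succ, ih, he]

variable (ω : ℕ) (hω : ∀ z : M, z ^ ω * z ^ ω = z ^ ω)
  (hDA : ∀ x y : M, (x * y) ^ ω * x * (x * y) ^ ω = (x * y) ^ ω)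

include hω hDA

private lemma aper (m : M) : m ^ (ω + 1) = m ^ ω := by
  have h := hDA m 1
  rw [mul_one] at h
  have h2 : m ^ ω * m * m ^ ω = m * m ^ ω := by
    rw [pow_mul_comm', mul_assoc, hω]
  rw [h2] at h
  rw [pow_succ, pow_mul_comm', h]

private lemma lemA {e u v : M} (he : e * e = e) (h : e * u * v * e = e) :
    e * u * e = e := by
  have hfe : ∀ n : ℕ, (e * u * v) ^ n * e = e := by
    intro n
    induction n with
    | zero => simp
    | succ k ih => rw [pow_succ, mul_assoc, h, ih]
  have hfe := hfe ω
  have hmid := hDA (e * u) v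
  set f := (e * u * v) ^ ω with hf
  calc e * u * e = f * e * u * (f * e) := by rw [hfe]
    _ = f * (e * u) * f * e := by rw [mul_assoc f e u, mul_assoc (f * (e * u)) f e]
    _ = f * e := by rw [hmid]
    _ = e := hfe

private lemma dualDA (x y : M) : (x * y) ^ ω * y * (x * y) ^ ω = (x * y) ^ ω := by
  rcases ω with _ | k
  · have h1 : y ^ 1 = y ^ 0 := aper 0 hω hDA y
    simpa using h1
  · have he : (x * y) ^ (k + 1) * (x * y) ^ (k + 1) = (x * y) ^ (k + 1) := hω _
    set e := (x * y) ^ (k + 1) with hedef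
    have hxye : x * y * e = e := by
      have h := aper (k + 1) hω hDA (x * y)
      rwa [pow_succ, pow_mul_comm', ← hedef] at h
    have heω : e ^ (k + 1) = e := idemPowSucc he k
    have hXe : x * (y * e) = e := by rw [← mul_assoc]; exact hxye
    have hcov : (x * (y * e)) ^ (k + 1) = e := by rw [hXe, heω]
    have hk1 := hDA (y * e) x
    set kk := (y * e * x) ^ (k + 1) with hkdef
    have hkye : kk * (y * e) = y * e := by
      have hc := conjPow (y * e) x (k + 1)
      rw [hcov, ← hkdef] at hc
      rw [hc, mul_assoc, he]
    have hcx : e * x = x * kk := by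
      have hc := conjPow x (y * e) (k + 1)
      rwa [hcov, ← hkdef] at hc
    have hek : e * kk = e * x := by
      have h2 : x * kk * (y * e) * kk = x * kk := by
        rw [mul_assoc (x * kk), mul_assoc x kk, ← mul_assoc kk, hk1]
      rw [← hcx] at h2
      calc e * kk = e * e * kk := by rw [he]
        _ = e * (x * (y * e)) * kk := by rw [hXe]
        _ = e * x * (y * e) * kk := by rw [mul_assoc e x]
        _ = e * x := h2
    calc e * y * e = e * (kk * (y * e)) := by rw [hkye, mul_assoc]
      _ = e * kk * (y * e) := by rw [mul_assoc]
      _ = e * x * (y * e) := by rw [hek]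
      _ = e * (x * (y * e)) := by rw [mul_assoc]
      _ = e * e := by rw [hXe]
      _ = e := he

private lemma lemB {e u v : M} (he : e * e = e) (h : e * u * v * e = e) :
    e * v * e = e := by
  have heuv : e * (u * (v * e)) = e := by
    rw [← mul_assoc, ← mul_assoc]; exact h
  have heg : e * (u * (v * e)) ^ ω = e := (absorbPow heuv.symm ω).symm
  have hgvg := dualDA ω hω hDA u (v * e)
  set g := (u * (v * e)) ^ ω with hg
  have key : e * v * e * g = e := by
    calc e * v * e * g = e * (v * e) * g := by rw [mul_assoc e v e]
      _ = e * g * (v * e) * g := by rw [heg]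
      _ = e * (g * (v * e) * g) := by
            rw [mul_assoc e g (v * e), mul_assoc e (g * (v * e)) g]
      _ = e * g := by rw [hgvg]
      _ = e := heg
  calc e * v * e = e * v * (e * g) := by rw [heg]
    _ = e * v * e * g := by rw [← mul_assoc (e * v)]
    _ = e := key

private lemma letters {A : Type*} {e : M} (he : e * e = e) (φ : FreeMonoid A →* M) :
    ∀ l : List A, e * φ (FreeMonoid.ofList l) * e = e →
      ∀ a ∈ l, e * φ (FreeMonoid.of a) * e = e := by
  intro l
  induction l with
  | nil => intro _ a ha; cases ha
  | cons b t ih =>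
      intro h a ha
      rw [FreeMonoid.ofList_cons, map_mul, ← mul_assoc] at h
      rcases List.mem_cons.mp ha with rfl | hat
      · exact lemA ω hω hDA he h
      · exact ih (lemB ω hω hDA he h) a hat

private lemma mainLem {A : Type*} (φ : FreeMonoid A →* M) (y : FreeMonoid A) :
    ∀ (l : List A) (x : FreeMonoid A) (q : M),
      φ x = φ x * (φ y * q) →
      (∀ a ∈ l, a ∈ FreeMonoid.toList y) →
      rEq (φ x) (φ (x * FreeMonoid.ofList l)) := by
  intro l
  induction l with
  | nil =>
      intro x q _ _
      rw [show FreeMonoid.ofList ([] : List A) = 1 from rfl, mul_one]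
      exact ⟨⟨1, (mul_one _).symm⟩, ⟨1, (mul_one _).symm⟩⟩
  | cons a t ih =>
      intro x q hx hsub
      set w := φ y * q with hwdef
      set e := w ^ ω with hedef
      have hxe : φ x = φ x * e := absorbPow hx ω
      have hee : e * e = e := hω w
      have hwe : w * e = e := by
        have h := aper ω hω hDA w
        rwa [pow_succ, pow_mul_comm', ← hedef] at h
      have hywe : e * φ y * q * e = e := by
        calc e * φ y * q * e = e * (φ y * q * e) := by
              rw [mul_assoc e (φ y) q, mul_assoc e (φ y * q) e]
          _ = e * (w * e) := by rw [hwdef]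
          _ = e * e := by rw [hwe]
          _ = e := hee
      have hye : e * φ y * e = e := lemA ω hω hDA hee hywe
      have hae : e * φ (FreeMonoid.of a) * e = e := by
        refine letters ω hω hDA hee φ (FreeMonoid.toList y) ?_ a (hsub a List.mem_cons_self)
        rw [FreeMonoid.ofList_toList]; exact hye
      have hstep1 : φ x * φ (FreeMonoid.of a) * e = φ x := by
        calc φ x * φ (FreeMonoid.of a) * e
            = φ x * e * φ (FreeMonoid.of a) * e := by rw [← hxe]
          _ = φ x * (e * φ (FreeMonoid.of a) * e) := by
              rw [mul_assoc (φ x) e (φ (FreeMonoid.of a)),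
                mul_assoc (φ x) (e * φ (FreeMonoid.of a)) e]
          _ = φ x * e := by rw [hae]
          _ = φ x := hxe.symm
      have hr2 : φ y * (q * e * φ (FreeMonoid.of a)) = e * φ (FreeMonoid.of a) := by
        calc φ y * (q * e * φ (FreeMonoid.of a))
            = φ y * (q * e) * φ (FreeMonoid.of a) := by
              rw [mul_assoc (φ y) (q * e) (φ (FreeMonoid.of a))]
          _ = φ y * q * e * φ (FreeMonoid.of a) := by rw [← mul_assoc (φ y) q e]
          _ = w * e * φ (FreeMonoid.of a) := by rw [hwdef]
          _ = e * φ (FreeMonoid.of a) := by rw [hwe]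
      have hstep2 : φ (x * FreeMonoid.of a) =
          φ (x * FreeMonoid.of a) * (φ y * (q * e * φ (FreeMonoid.of a))) := by
        rw [hr2, map_mul, ← mul_assoc, hstep1]
      have IH := ih (x * FreeMonoid.of a) (q * e * φ (FreeMonoid.of a)) hstep2
        (fun b hb => hsub b (List.mem_cons_of_mem a hb))
      have hcast : (x * FreeMonoid.of a) * FreeMonoid.ofList t
          = x * FreeMonoid.ofList (a :: t) := by
        rw [FreeMonoid.ofList_cons, mul_assoc]
      rw [hcast] at IH
      have heq1 : rEq (φ x) (φ (x * FreeMonoid.of a)) :=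
        ⟨⟨e, by rw [map_mul, hstep1]⟩, ⟨φ (FreeMonoid.of a), map_mul φ x _⟩⟩
      exact rEq_trans heq1 IH

end Aux

theorem stmt5 {A : Type*} [Monoid M] [Finite M] (ω : ℕ)
    (hω : ∀ z : M, z ^ ω * z ^ ω = z ^ ω)
    (hDA : ∀ x y : M, (x * y) ^ ω * x * (x * y) ^ ω = (x * y) ^ ω)
    (φ : FreeMonoid A →* M) (x y z : FreeMonoid A)
    (hR : rEq (φ x) (φ (x * y)))
    (halph : ∀ a : A, a ∈ FreeMonoid.toList z → a ∈ FreeMonoid.toList y) :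
    rEq (φ x) (φ (x * z)) := by
  obtain ⟨q, hq⟩ := hR.1
  have hq' : φ x = φ x * (φ y * q) := by
    nth_rewrite 1 [hq]
    rw [map_mul, mul_assoc]
  have h := mainLem ω hω hDA φ y (FreeMonoid.toList z) x q hq' halph
  rwa [FreeMonoid.ofList_toList] at h
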